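/- Let $X$ be a Poisson-binomial random variable, the sum of $K$ independent Bernoulli random variables with parameters $p_1,\dots,p_K \in [0,1]$, and let $Y \sim \mathrm{Binomial}(K,p)$. If $p^K \le \prod_{k=1}^K p_k$, then $X$ is stochastically larger than $Y$, i.e., $\mathbb{P}(X \ge t) \ge \mathbb{P}(Y \ge t)$ for every $t$. -/

import Mathlib

open MeasureTheory ProbabilityTheory

namespace PBAux

/-- Tail `P(X ≥ m)` of a Poisson-binomial distribution with parameter list `l`. -/
def tail : List ℝ → ℕ → ℝ
  | [], m => if m = 0 then 1 else 0
  | a :: l, m => a * tail l (m - 1) + (1 - a) * tail l m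

lemma tail_nil (m : ℕ) : tail [] m = if m = 0 then 1 else 0 := rfl

lemma tail_cons (a : ℝ) (l : List ℝ) (m : ℕ) :
    tail (a :: l) m = a * tail l (m - 1) + (1 - a) * tail l m := rfl

lemma tail_zero (l : List ℝ) : tail l 0 = 1 := by
  induction l with
  | nil => simp [tail_nil]
  | cons a l ih => simp only [tail_cons, Nat.zero_sub, ih]; ring

lemma tail_nonneg {l : List ℝ} (h : ∀ x ∈ l, 0 ≤ x ∧ x ≤ 1) (m : ℕ) : 0 ≤ tail l m := by
  induction l generalizing m with
  | nil => rw [tail_nil]; split <;> norm_num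
  | cons a l ih =>
    have ha := h a (by simp)
    have h' : ∀ x ∈ l, 0 ≤ x ∧ x ≤ 1 := fun x hx => h x (by simp [hx])
    rw [tail_cons]
    have := ih h' (m - 1)
    have := ih h' m
    nlinarith [ha.1, ha.2]

lemma tail_le_one {l : List ℝ} (h : ∀ x ∈ l, 0 ≤ x ∧ x ≤ 1) (m : ℕ) : tail l m ≤ 1 := by
  induction l generalizing m with
  | nil => rw [tail_nil]; split <;> norm_num
  | cons a l ih =>
    have ha := h a (by simp)
    have h' : ∀ x ∈ l, 0 ≤ x ∧ x ≤ 1 := fun x hx => h x (by simp [hx])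
    rw [tail_cons]
    have := ih h' (m - 1)
    have := ih h' m
    nlinarith [ha.1, ha.2]

lemma tail_succ_le {l : List ℝ} (h : ∀ x ∈ l, 0 ≤ x ∧ x ≤ 1) (m : ℕ) :
    tail l (m + 1) ≤ tail l m := by
  induction l generalizing m with
  | nil =>
    rw [tail_nil, tail_nil]
    simp only [Nat.succ_ne_zero, if_false]
    split <;> norm_num
  | cons a l ih =>
    have ha := h a (by simp)
    have h' : ∀ x ∈ l, 0 ≤ x ∧ x ≤ 1 := fun x hx => h x (by simp [hx])
    rw [tail_cons, tail_cons]
    have h1 : tail l ((m + 1) - 1) ≤ tail l (m - 1) := by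
      cases m with
      | zero => simp
      | succ k => simpa using ih h' k
    have h2 : tail l (m + 1) ≤ tail l m := ih h' m
    nlinarith [ha.1, ha.2]

lemma tail_pred_le {l : List ℝ} (h : ∀ x ∈ l, 0 ≤ x ∧ x ≤ 1) (m : ℕ) :
    tail l m ≤ tail l (m - 1) := by
  cases m with
  | zero => simp
  | succ k => simpa using tail_succ_le h k

lemma tail_perm {l l' : List ℝ} (h : l.Perm l') : tail l = tail l' := by
  induction h with
  | nil => rfl
  | cons a _ ih => funext m; rw [tail_cons, tail_cons, ih]
  | swap a b l => funext m; simp only [tail_cons]; ring_nf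
  | trans _ _ ih1 ih2 => rw [ih1, ih2]

/-- Monotonicity under cons: if the sub-tails dominate and `b ≤ a`, the cons tails dominate. -/
lemma tail_cons_le_cons {a b : ℝ} {l l' : List ℝ}
    (hl : ∀ x ∈ l, 0 ≤ x ∧ x ≤ 1)
    (hb0 : 0 ≤ b) (hba : b ≤ a) (ha1 : a ≤ 1)
    (h : ∀ m, tail l' m ≤ tail l m) (m : ℕ) :
    tail (b :: l') m ≤ tail (a :: l) m := by
  rw [tail_cons, tail_cons]
  have h1 := h (m - 1)
  have h2 := h m
  have h3 := tail_pred_le hl m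
  nlinarith

/-- Pairwise exchange lemma: decreasing both the product `ab` and `a+b-ab`
decreases the tail. -/
lemma tail_pair_le {a b a' b' : ℝ} {l : List ℝ}
    (hl : ∀ x ∈ l, 0 ≤ x ∧ x ≤ 1)
    (hprod : a' * b' ≤ a * b)
    (hsum : a' + b' - a' * b' ≤ a + b - a * b) (m : ℕ) :
    tail (a' :: b' :: l) m ≤ tail (a :: b :: l) m := by
  simp only [tail_cons]
  have h1 : tail l (m - 1) ≤ tail l (m - 1 - 1) := tail_pred_le hl (m - 1)
  have h2 : tail l m ≤ tail l (m - 1) := tail_pred_le hl m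
  nlinarith [mul_nonneg (sub_nonneg.2 hprod) (sub_nonneg.2 h1),
    mul_nonneg (sub_nonneg.2 hsum) (sub_nonneg.2 h2)]

lemma exists_max : ∀ (l : List ℝ), l ≠ [] → ∃ a ∈ l, ∀ x ∈ l, x ≤ a := by
  intro l
  induction l with
  | nil => intro h; exact absurd rfl h
  | cons a l ih =>
    intro _
    rcases eq_or_ne l ([] : List ℝ) with rfl | hne
    · exact ⟨a, by simp, by simp⟩
    · obtain ⟨c, hc, hmax⟩ := ih hne
      rcases le_total a c with h | h
      · exact ⟨c, by simp [hc], by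
          intro x hx
          rcases List.mem_cons.1 hx with rfl | hx
          · exact h
          · exact hmax x hx⟩
      · exact ⟨a, by simp, by
          intro x hx
          rcases List.mem_cons.1 hx with rfl | hx
          · exact le_rfl
          · exact (hmax x hx).trans h⟩

lemma list_prod_le_pow {l : List ℝ} {a : ℝ}
    (h : ∀ x ∈ l, 0 ≤ x ∧ x ≤ a) : l.prod ≤ a ^ l.length := by
  induction l with
  | nil => simp
  | cons b l ih =>
    have hb := h b (by simp)
    have h' : ∀ x ∈ l, 0 ≤ x ∧ x ≤ a := fun x hx => h x (by simp [hx])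
    have hprod_nonneg : 0 ≤ l.prod := List.prod_nonneg (fun x hx => (h' x hx).1)
    have := ih h'
    rw [List.prod_cons, List.length_cons, pow_succ']
    have ha : 0 ≤ a := hb.1.trans hb.2
    calc b * l.prod ≤ a * l.prod := mul_le_mul_of_nonneg_right hb.2 hprod_nonneg
      _ ≤ a * a ^ l.length := mul_le_mul_of_nonneg_left this ha

/-- Case A of the main lemma: all parameters are at least `q`. -/
lemma tail_replicate_le_of_forall_le {q : ℝ} (hq0 : 0 ≤ q) :
    ∀ (l : List ℝ), (∀ x ∈ l, q ≤ x ∧ x ≤ 1) →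
      ∀ m, tail (List.replicate l.length q) m ≤ tail l m := by
  intro l
  induction l with
  | nil => intro _ m; simp
  | cons a l ih =>
    intro h m
    have ha := h a (by simp)
    have h' : ∀ x ∈ l, q ≤ x ∧ x ≤ 1 := fun x hx => h x (by simp [hx])
    have hl01 : ∀ x ∈ l, 0 ≤ x ∧ x ≤ 1 := fun x hx =>
      ⟨hq0.trans (h' x hx).1, (h' x hx).2⟩
    rw [List.length_cons, List.replicate_succ]
    exact tail_cons_le_cons hl01 hq0 ha.1 ha.2 (ih h') m

/-- Main Boland–Proschan inequality for the combinatorial tail function. -/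
lemma tail_replicate_le {q : ℝ} (hq0 : 0 ≤ q) (hq1 : q ≤ 1) :
    ∀ (n : ℕ) (l : List ℝ), l.length = n → (∀ x ∈ l, 0 ≤ x ∧ x ≤ 1) →
      q ^ n ≤ l.prod → ∀ m, tail (List.replicate n q) m ≤ tail l m := by
  intro n
  induction n with
  | zero =>
    intro l hlen _ _ m
    rw [List.length_eq_zero_iff] at hlen
    subst hlen
    simp
  | succ n ih =>
    intro l hlen hl hprod m
    by_cases hall : ∀ x ∈ l, q ≤ x
    · have := tail_replicate_le_of_forall_le hq0 l
        (fun x hx => ⟨hall x hx, (hl x hx).2⟩) m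
      rwa [hlen] at this
    · push_neg at hall
      obtain ⟨b, hbl, hbq⟩ := hall
      have hb0 : 0 ≤ b := (hl b hbl).1
      have hqpos : 0 < q := lt_of_le_of_lt hb0 hbq
      -- find the max element a, with q ≤ a
      have hne : l ≠ [] := by
        intro h; subst h; simp at hbl
      obtain ⟨a, hal, hamax⟩ := exists_max l hne
      have ha1 : a ≤ 1 := (hl a hal).2
      have hqa : q ≤ a := by
        have h1 : l.prod ≤ a ^ l.length :=
          list_prod_le_pow (fun x hx => ⟨(hl x hx).1, hamax x hx⟩)
        have h2 : q ^ (n + 1) ≤ a ^ (n + 1) := by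
          calc q ^ (n + 1) ≤ l.prod := hprod
            _ ≤ a ^ l.length := h1
            _ = a ^ (n + 1) := by rw [hlen]
        exact le_of_pow_le_pow_left₀ (Nat.succ_ne_zero n) (hb0.trans (hamax b hbl)) h2
      have hab : a ≠ b := by
        intro h; subst h; exact absurd hqa (not_le.2 hbq)
      -- build the permutation l ~ a :: b :: l₂
      have hael : a ∈ l.erase b := (List.mem_erase_of_ne hab).2 hal
      set l₂ := (l.erase b).erase a with hl₂
      have hperm : l.Perm (a :: b :: l₂) :=
        (List.perm_cons_erase hbl).trans
          ((List.Perm.cons b (List.perm_cons_erase hael)).trans (List.Perm.swap a b l₂))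
      have hsub2 : ∀ x ∈ l₂, x ∈ l := fun x hx =>
        List.erase_subset (List.erase_subset hx)
      have hl₂01 : ∀ x ∈ l₂, 0 ≤ x ∧ x ≤ 1 := fun x hx => hl x (hsub2 x hx)
      have hlen2 : l₂.length + 1 = n := by
        have := hperm.length_eq
        rw [hlen] at this
        simpa using this.symm
      have hprodeq : l.prod = a * (b * l₂.prod) := by
        rw [hperm.prod_eq]; simp [List.prod_cons]
      -- define c = a * b / q
      set c := a * b / q with hc
      have hcq : q * c = a * b := by
        rw [hc]; field_simp
      have hc0 : 0 ≤ c := div_nonneg (mul_nonneg (hb0.trans (hamax b hbl)) hb0) hq0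
      have hc1 : c ≤ 1 := by
        rw [hc, div_le_one hqpos]
        nlinarith [hb0, ha1, hbq]
      -- apply induction hypothesis to c :: l₂
      have hih : ∀ m, tail (List.replicate n q) m ≤ tail (c :: l₂) m := by
        apply ih (c :: l₂)
        · simp [hlen2]
        · intro x hx
          rcases List.mem_cons.1 hx with rfl | hx
          · exact ⟨hc0, hc1⟩
          · exact hl₂01 x hx
        · rw [List.prod_cons]
          have h1 : q * q ^ n ≤ a * (b * l₂.prod) := by
            rw [← hprodeq, ← pow_succ']
            exact hprod
          have h2 : q * (c * l₂.prod) = a * (b * l₂.prod) := by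
            rw [← mul_assoc, hcq, mul_assoc]
          nlinarith [hqpos]
      -- chain the inequalities
      have step1 : tail (List.replicate (n + 1) q) m ≤ tail (q :: c :: l₂) m := by
        rw [List.replicate_succ]
        exact tail_cons_le_cons
          (fun x hx => by
            rcases List.mem_cons.1 hx with rfl | hx
            · exact ⟨hc0, hc1⟩
            · exact hl₂01 x hx)
          hq0 le_rfl hq1 hih m
      have step2 : tail (q :: c :: l₂) m ≤ tail (a :: b :: l₂) m := by
        apply tail_pair_le hl₂01
        · rw [hcq]
        · have hq_add : q + c ≤ a + b := by
            nlinarith [mul_nonneg (sub_nonneg.2 hqa) (sub_nonneg.2 hbq.le), hqpos, hcq]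
          rw [hcq]; linarith
      calc tail (List.replicate (n + 1) q) m ≤ tail (q :: c :: l₂) m := step1
        _ ≤ tail (a :: b :: l₂) m := step2
        _ = tail l m := by rw [tail_perm hperm]

/-- Binomial tail sums. -/
noncomputable def binTail (q : ℝ) (n m : ℕ) : ℝ :=
  ∑ j ∈ Finset.range (n + 1),
    if m ≤ j then (n.choose j : ℝ) * q ^ j * (1 - q) ^ (n - j) else 0

lemma binTail_zero (q : ℝ) (n : ℕ) : binTail q n 0 = 1 := by
  unfold binTail
  have h : (∑ j ∈ Finset.range (n + 1), q ^ j * (1 - q) ^ (n - j) * (n.choose j : ℝ)) = 1 := by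
    rw [← add_pow]
    norm_num
  conv_rhs => rw [← h]
  apply Finset.sum_congr rfl
  intro j _
  rw [if_pos (Nat.zero_le j)]
  ring

lemma binTail_succ (q : ℝ) (n m : ℕ) :
    binTail q (n + 1) (m + 1) = q * binTail q n m + (1 - q) * binTail q n (m + 1) := by
  unfold binTail
  rw [Finset.sum_range_succ' (fun j => if m + 1 ≤ j then
      ((n+1).choose j : ℝ) * q ^ j * (1 - q) ^ (n + 1 - j) else 0) (n + 1)]
  rw [if_neg (Nat.not_succ_le_zero m), add_zero]
  have hsplit : ∀ i ∈ Finset.range (n + 1),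
      (if m + 1 ≤ i + 1 then ((n+1).choose (i+1) : ℝ) * q ^ (i+1) * (1 - q) ^ (n + 1 - (i+1)) else 0)
      = (if m ≤ i then (n.choose i : ℝ) * q ^ (i+1) * (1 - q) ^ (n - i) else 0)
        + (if m ≤ i then (n.choose (i+1) : ℝ) * q ^ (i+1) * (1 - q) ^ (n - i) else 0) := by
    intro i _
    have h1 : m + 1 ≤ i + 1 ↔ m ≤ i := by omega
    have h2 : n + 1 - (i + 1) = n - i := by omega
    have h3 : ((n+1).choose (i+1) : ℝ) = (n.choose i : ℝ) + (n.choose (i+1) : ℝ) := by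
      rw [← Nat.cast_add, ← Nat.choose_succ_succ]
    rw [h2, h3]
    by_cases h : m ≤ i
    · rw [if_pos (h1.2 h), if_pos h, if_pos h]; ring
    · rw [if_neg (fun hc => h (h1.1 hc)), if_neg h, if_neg h, add_zero]
  rw [Finset.sum_congr rfl hsplit, Finset.sum_add_distrib]
  congr 1
  · -- first sum equals q * binTail q n m
    rw [Finset.mul_sum]
    apply Finset.sum_congr rfl
    intro i _
    by_cases h : m ≤ i
    · rw [if_pos h, if_pos h]; ring
    · rw [if_neg h, if_neg h, mul_zero]
  · -- second sum equals (1 - q) * binTail q n (m + 1)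
    rw [Finset.mul_sum]
    rw [Finset.sum_range_succ (fun i => if m ≤ i then
        (n.choose (i+1) : ℝ) * q ^ (i+1) * (1 - q) ^ (n - i) else 0) n]
    simp only [Nat.choose_succ_self, Nat.cast_zero, zero_mul, ite_self, add_zero]
    rw [Finset.sum_range_succ' (fun i => (1 - q) * (if m + 1 ≤ i then
        (n.choose i : ℝ) * q ^ i * (1 - q) ^ (n - i) else 0)) n]
    rw [if_neg (Nat.not_succ_le_zero m), mul_zero, add_zero]
    apply Finset.sum_congr rfl
    intro i hi
    have hin : i < n := Finset.mem_range.1 hi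
    have h1 : m + 1 ≤ i + 1 ↔ m ≤ i := by omega
    by_cases h : m ≤ i
    · rw [if_pos h, if_pos (h1.2 h)]
      have h2 : n - i = (n - (i + 1)) + 1 := by omega
      rw [h2, pow_succ]
      ring
    · rw [if_neg h, if_neg (fun hc => h (h1.1 hc)), mul_zero]

lemma tail_replicate_eq (q : ℝ) (n : ℕ) :
    ∀ m, tail (List.replicate n q) m = binTail q n m := by
  induction n with
  | zero =>
    intro m
    rw [List.replicate_zero, tail_nil]
    unfold binTail
    rw [Finset.sum_range_one]
    have : m ≤ 0 ↔ m = 0 := Nat.le_zero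
    by_cases h : m = 0
    · rw [if_pos h, if_pos (this.2 h)]; simp
    · rw [if_neg h, if_neg (fun hc => h (this.1 hc))]
  | succ n ih =>
    intro m
    cases m with
    | zero => rw [tail_zero, binTail_zero]
    | succ m' =>
      rw [List.replicate_succ, tail_cons, Nat.add_sub_cancel, ih m', ih (m' + 1), binTail_succ]

end PBAux

open PBAux in
/-- Boland–Proschan stochastic dominance: a Poisson-binomial random variable
`X = ∑ φ k` (sum of independent Bernoullis with parameters `p k`) stochastically
dominates a `Binomial(K, p)` random variable whenever `p^K ≤ ∏ p k`; i.e.,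
`P(X ≥ t) ≥ P(Binomial(K,p) ≥ t)` for every real `t`, where the latter probability
is the explicit binomial tail sum. -/
theorem poisson_binomial_stoch_dominates_binomial {Ω : Type*} [MeasurableSpace Ω]
    (μ : Measure Ω) [IsProbabilityMeasure μ]
    (K : ℕ) (hK : 1 ≤ K)
    (p : Fin K → ℝ) (hp0 : ∀ k, 0 ≤ p k) (hp1 : ∀ k, p k ≤ 1)
    (q : ℝ) (hq0 : 0 ≤ q) (hq1 : q ≤ 1)
    (φ : Fin K → Ω → ℕ)
    (hmeas : ∀ k, Measurable (φ k))
    (h01 : ∀ k ω, φ k ω = 0 ∨ φ k ω = 1)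
    (hindep : iIndepFun φ μ)
    (hparam : ∀ k, μ {ω | φ k ω = 1} = ENNReal.ofReal (p k))
    (hdom : q ^ K ≤ ∏ k, p k) :
    ∀ t : ℝ,
      ENNReal.ofReal (∑ j ∈ Finset.range (K + 1),
          if t ≤ (j : ℝ) then (K.choose j : ℝ) * q ^ j * (1 - q) ^ (K - j) else 0) ≤
        μ {ω | t ≤ ((∑ k, φ k ω : ℕ) : ℝ)} := by
  classical
  -- Step 1: compute the distribution of partial sums.
  have key : ∀ s : Finset (Fin K), ∀ m : ℕ,
      μ {ω | m ≤ ∑ k ∈ s, φ k ω} = ENNReal.ofReal (tail (s.toList.map p) m) := by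
    intro s
    induction s using Finset.induction_on with
    | empty =>
      intro m
      cases m with
      | zero =>
        simp only [Finset.sum_empty, Nat.zero_le, Set.setOf_true]
        rw [measure_univ]
        simp [tail_nil]
      | succ m' =>
        simp only [Finset.sum_empty]
        have : {ω : Ω | m' + 1 ≤ 0} = ∅ := by
          ext ω; simp
        rw [this, measure_empty]
        simp [tail_nil]
    | @insert j s hj ih =>
      intro m
      -- tail of the new list equals tail of (p j :: old list)
      have hpermtail : tail ((insert j s).toList.map p) = tail (p j :: s.toList.map p) := by
        apply tail_perm
        exact List.Perm.map p (Finset.toList_insert hj)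
      have hLentries : ∀ x ∈ s.toList.map p, 0 ≤ x ∧ x ≤ 1 := by
        intro x hx
        obtain ⟨k, _, rfl⟩ := List.mem_map.1 hx
        exact ⟨hp0 k, hp1 k⟩
      cases m with
      | zero =>
        simp only [Nat.zero_le, Set.setOf_true]
        rw [measure_univ, hpermtail, tail_zero]
        simp
      | succ m' =>
        -- independence of (∑ k ∈ s, φ k) and φ j
        have hI : IndepFun (∑ k ∈ s, φ k) (φ j) μ :=
          hindep.indepFun_finsetSum_of_notMem hmeas hj
        have hSapp : ∀ ω, (∑ k ∈ s, φ k) ω = ∑ k ∈ s, φ k ω := by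
          intro ω; simp [Finset.sum_apply]
        -- decompose the event
        have hset : {ω | m' + 1 ≤ ∑ k ∈ insert j s, φ k ω}
            = ((∑ k ∈ s, φ k) ⁻¹' {x | m' ≤ x} ∩ φ j ⁻¹' {1})
              ∪ ((∑ k ∈ s, φ k) ⁻¹' {x | m' + 1 ≤ x} ∩ φ j ⁻¹' {0}) := by
          ext ω
          simp only [Set.mem_setOf_eq, Set.mem_union, Set.mem_inter_iff, Set.mem_preimage,
            Set.mem_singleton_iff, hSapp, Finset.sum_insert hj]
          rcases h01 j ω with h | h <;> rw [h] <;> constructor <;> intro hh <;> omega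
        have hmeasS : Measurable (∑ k ∈ s, φ k) := by
          rw [show (∑ k ∈ s, φ k) = fun ω => ∑ k ∈ s, φ k ω from funext hSapp]
          exact Finset.measurable_sum s fun k _ => hmeas k
        have hdisj : Disjoint
            ((∑ k ∈ s, φ k) ⁻¹' {x | m' ≤ x} ∩ φ j ⁻¹' {1})
            ((∑ k ∈ s, φ k) ⁻¹' {x | m' + 1 ≤ x} ∩ φ j ⁻¹' {0}) := by
          apply Set.disjoint_left.2
          rintro ω ⟨_, h1⟩ ⟨_, h0⟩
          simp only [Set.mem_preimage, Set.mem_singleton_iff] at h1 h0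
          omega
        have hmeas2 : MeasurableSet
            ((∑ k ∈ s, φ k) ⁻¹' {x | m' + 1 ≤ x} ∩ φ j ⁻¹' {0}) :=
          (hmeasS .of_discrete).inter ((hmeas j) .of_discrete)
        rw [hset, measure_union hdisj hmeas2]
        have e1 := hI.measure_inter_preimage_eq_mul {x | m' ≤ x} {1}
          .of_discrete .of_discrete
        have e2 := hI.measure_inter_preimage_eq_mul {x | m' + 1 ≤ x} {0}
          .of_discrete .of_discrete
        rw [e1, e2]
        -- identify the marginal measures
        have hone : μ (φ j ⁻¹' {1}) = ENNReal.ofReal (p j) := by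
          rw [← hparam j]
          rfl
        have hzero : μ (φ j ⁻¹' {0}) = ENNReal.ofReal (1 - p j) := by
          have hcompl : φ j ⁻¹' {0} = (φ j ⁻¹' {1})ᶜ := by
            ext ω
            simp only [Set.mem_preimage, Set.mem_singleton_iff, Set.mem_compl_iff]
            rcases h01 j ω with h | h <;> simp [h]
          rw [hcompl, measure_compl ((hmeas j) .of_discrete) (measure_ne_top μ _), hone,
            measure_univ]
          rw [ENNReal.ofReal_sub 1 (hp0 j), ENNReal.ofReal_one]
        have hSm : ∀ m'' : ℕ, (∑ k ∈ s, φ k) ⁻¹' {x | m'' ≤ x} = {ω | m'' ≤ ∑ k ∈ s, φ k ω} := by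
          intro m''
          ext ω
          simp [Set.mem_preimage, hSapp]
        rw [hSm m', hSm (m' + 1), ih m', ih (m' + 1), hone, hzero]
        -- now pure ENNReal/Real computation
        have ht1 : 0 ≤ tail (s.toList.map p) m' := tail_nonneg hLentries m'
        have ht2 : 0 ≤ tail (s.toList.map p) (m' + 1) := tail_nonneg hLentries (m' + 1)
        rw [hpermtail, tail_cons]
        have hm'eq : (m' + 1) - 1 = m' := by omega
        rw [hm'eq]
        rw [ENNReal.ofReal_add (mul_nonneg (hp0 j) ht1)
          (mul_nonneg (by linarith [hp1 j]) ht2),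
          ENNReal.ofReal_mul (hp0 j), ENNReal.ofReal_mul (by linarith [hp1 j] : (0:ℝ) ≤ 1 - p j)]
        ring
  -- Step 2: assemble
  intro t
  set m := ⌈t⌉₊ with hm
  have hsetm : {ω | t ≤ ((∑ k, φ k ω : ℕ) : ℝ)} = {ω | m ≤ ∑ k, φ k ω} := by
    ext ω
    simp only [Set.mem_setOf_eq, hm]
    exact (Nat.ceil_le).symm
  have hsum : (∑ j ∈ Finset.range (K + 1),
      if t ≤ (j : ℝ) then (K.choose j : ℝ) * q ^ j * (1 - q) ^ (K - j) else 0)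
      = binTail q K m := by
    unfold binTail
    apply Finset.sum_congr rfl
    intro j _
    congr 1
    simp only [eq_iff_iff, hm]
    exact (Nat.ceil_le).symm
  rw [hsetm, hsum, key Finset.univ m]
  apply ENNReal.ofReal_le_ofReal
  rw [← tail_replicate_eq q K m]
  have hlen : (Finset.univ.toList.map p).length = K := by
    rw [List.length_map, Finset.length_toList]
    simp
  have hentries : ∀ x ∈ Finset.univ.toList.map p, 0 ≤ x ∧ x ≤ 1 := by
    intro x hx
    obtain ⟨k, _, rfl⟩ := List.mem_map.1 hx
    exact ⟨hp0 k, hp1 k⟩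
  have hprod : q ^ K ≤ (Finset.univ.toList.map p).prod := by
    rw [Finset.prod_map_toList]
    exact hdom
  exact tail_replicate_le hq0 hq1 K (Finset.univ.toList.map p) hlen hentries hprod m
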